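/- Let G = (L, Σ, δ, O) be a POMDP, T ⊆ L, and l ∈ L. Suppose that no state l' reachable from l in the underlying graph of G (including l itself) admits an observation-based strategy that is almost-sure winning for Safe(T) from l'. Then for every observation-based strategy α, Pr_l^α(Büchi(L ∖ T)) = 1, i.e., with probability 1 the play visits states outside T infinitely often. -/

import Mathlib

open scoped ENNReal

/-- A partially-observable Markov decision process (POMDP) with states `L`,
actions `A` and observations `O`: a probabilistic transition function and an
observation function (the observations partition the state space). -/
structure POMDP (L : Type) (A : Type) (O : Type) where
  δ : L → A → PMF L
  obs : L → O

namespace POMDP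

variable {L A O : Type}

/-- A (randomized) strategy: given the initial state and the history of
(action, state) steps played so far, it chooses a distribution on actions. -/
abbrev Strategy (L A : Type) := L → List (A × L) → PMF A

/-- The sequence of states visited along a finite prefix. -/
def statesOf (l : L) (h : List (A × L)) : List L := l :: h.map Prod.snd

/-- Auxiliary probability of a finite prefix, for a strategy `π` given as a
function of the remaining history. -/
noncomputable def prefProbAux (M : POMDP L A O) :
    (List (A × L) → PMF A) → L → List (A × L) → ℝ≥0∞
  | _, _, [] => 1
  | π, l, (a, l') :: h =>
      π [] a * M.δ l a l' * M.prefProbAux (fun h' => π ((a, l') :: h')) l' h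

/-- The probability, under strategy `α` from state `l`, that the play starts
with the finite prefix `h` of (action, state) steps. -/
noncomputable def prefProb (M : POMDP L A O) (α : Strategy L A) (l : L)
    (h : List (A × L)) : ℝ≥0∞ :=
  M.prefProbAux (α l) l h

/-- A prefix is consistent with `α` from `l` if it has positive probability. -/
def Consistent (M : POMDP L A O) (α : Strategy L A) (l : L) (h : List (A × L)) : Prop :=
  0 < M.prefProb α l h

/-- The probability, under strategy `α` from state `l`, that the length-`n`
prefix of the play satisfies the predicate `P`. -/
noncomputable def horizonProb (M : POMDP L A O) [Fintype L] [Fintype A]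
    (α : Strategy L A) (l : L) (n : ℕ) (P : List (A × L) → Prop) : ℝ≥0∞ :=
  ∑ f : Fin n → A × L,
    Set.indicator {g : Fin n → A × L | P (List.ofFn g)}
      (fun g => M.prefProb α l (List.ofFn g)) f

/-- `Pr_l^α(Reach(T))`: probability that the play visits a state of `T`
(as the increasing limit of the finite-horizon reachability probabilities). -/
noncomputable def reachProb (M : POMDP L A O) [Fintype L] [Fintype A]
    (α : Strategy L A) (l : L) (T : Set L) : ℝ≥0∞ :=
  ⨆ n, M.horizonProb α l n (fun h => ∃ s ∈ statesOf l h, s ∈ T)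

/-- `Pr_l^α(Safe(T))`: probability that all states of the play lie in `T`
(as the decreasing limit of the finite-horizon safety probabilities). -/
noncomputable def safeProb (M : POMDP L A O) [Fintype L] [Fintype A]
    (α : Strategy L A) (l : L) (T : Set L) : ℝ≥0∞ :=
  ⨅ n, M.horizonProb α l n (fun h => ∀ s ∈ statesOf l h, s ∈ T)

/-- `Pr_l^α(Until(T₁,T₂))`: probability that the play visits `T₂` at some
position `k` with all positions `≤ k` in `T₁`. -/
noncomputable def untilProb (M : POMDP L A O) [Fintype L] [Fintype A]
    (α : Strategy L A) (l : L) (T₁ T₂ : Set L) : ℝ≥0∞ :=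
  ⨆ n, M.horizonProb α l n (fun h => ∃ k, ∃ hk : k < (statesOf l h).length,
      (statesOf l h).get ⟨k, hk⟩ ∈ T₂ ∧
      ∀ j, ∀ hj : j < (statesOf l h).length, j ≤ k → (statesOf l h).get ⟨j, hj⟩ ∈ T₁)

/-- `Pr_l^α(coBüchi(T))`: probability that from some point on all states of
the play lie in `T`. -/
noncomputable def coBuchiProb (M : POMDP L A O) [Fintype L] [Fintype A]
    (α : Strategy L A) (l : L) (T : Set L) : ℝ≥0∞ :=
  ⨆ k, ⨅ n, M.horizonProb α l n (fun h =>
    ∀ j, ∀ hj : j < (statesOf l h).length, k ≤ j → (statesOf l h).get ⟨j, hj⟩ ∈ T)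

/-- `Pr_l^α(Büchi(T))`: probability that the play visits `T` infinitely often. -/
noncomputable def buchiProb (M : POMDP L A O) [Fintype L] [Fintype A]
    (α : Strategy L A) (l : L) (T : Set L) : ℝ≥0∞ :=
  ⨅ k, ⨆ n, M.horizonProb α l n (fun h =>
    ∃ j, ∃ hj : j < (statesOf l h).length, k ≤ j ∧ (statesOf l h).get ⟨j, hj⟩ ∈ T)

/-- A strategy is observation-based if it plays the same distribution after any
two prefixes with the same sequences of observations and of actions. -/
def ObservationBased (M : POMDP L A O) (α : Strategy L A) : Prop :=
  ∀ l l' (h h' : List (A × L)), M.obs l = M.obs l' →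
    h.map Prod.fst = h'.map Prod.fst →
    h.map (fun p => M.obs p.2) = h'.map (fun p => M.obs p.2) →
    α l h = α l' h'

/-- A strategy is pure if it always plays a Dirac distribution. -/
def PureStrategy (α : Strategy L A) : Prop := ∀ l h, ∃ a, α l h = PMF.pure a

/-- Edge of the underlying graph of the POMDP. -/
def Edge (M : POMDP L A O) (l l' : L) : Prop := ∃ a, 0 < M.δ l a l'

/-- Reachability in the underlying graph of the POMDP. -/
def ReachableFrom (M : POMDP L A O) (l l' : L) : Prop :=
  Relation.ReflTransGen M.Edge l l'

/-- The memory state reached by a memory-update function `u` (together with the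
current state) after running through a prefix. -/
def memRun (M : POMDP L A O) {Mem : Type} (u : Mem → O → A → Mem) :
    Mem → L → List (A × L) → Mem × L
  | m, l, [] => (m, l)
  | m, l, (a, l') :: h => M.memRun u (u m (M.obs l) a) l' h

/-- The (observation-based) strategy induced by a finite-memory machine given by
memory-update function `u`, next-action function `next` and initial memory `m0`. -/
def fmStrategy (M : POMDP L A O) {Mem : Type} (u : Mem → O → A → Mem)
    (next : Mem → O → PMF A) (m0 : Mem) : Strategy L A :=
  fun l h =>
    let p := M.memRun u m0 l h
    next p.1 (M.obs p.2)

/-- The distribution choosing `x` and `y` with probability 1/2 each. -/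
noncomputable def half (x y : L) : PMF L :=
  (PMF.uniformOfFintype Bool).map (fun b => if b then x else y)

end POMDP
set_option linter.unusedSectionVars false

namespace POMDP

section Aux

variable {L A O : Type} [Fintype L] [Fintype A]

/-- obs-consistency of a continuation strategy. -/
def ObsCons (M : POMDP L A O) (π : List (A × L) → PMF A) : Prop :=
  ∀ h h' : List (A × L), h.map Prod.fst = h'.map Prod.fst →
    h.map (fun p => M.obs p.2) = h'.map (fun p => M.obs p.2) → π h = π h'

lemma ObsCons.cons {M : POMDP L A O} {π} (hπ : M.ObsCons π) (p : A × L) :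
    M.ObsCons (fun t => π (p :: t)) := fun h h' h1 h2 =>
  hπ _ _ (by simp [h1]) (by simp [h2])

lemma ObsCons.congr_cons {M : POMDP L A O} {π} (hπ : M.ObsCons π) {a : A} {y y' : L}
    (h : M.obs y = M.obs y') :
    (fun t => π ((a, y) :: t)) = fun t => π ((a, y') :: t) :=
  funext fun t => hπ _ _ rfl (by simp [h])

@[simp] lemma prefProbAux_nil (M : POMDP L A O) (π) (x : L) :
    M.prefProbAux π x ([] : List (A × L)) = 1 := rfl

lemma prefProbAux_cons (M : POMDP L A O) (π) (x : L) (a : A) (y : L) (h) :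
    M.prefProbAux π x ((a, y) :: h) =
      π [] a * M.δ x a y * M.prefProbAux (fun t => π ((a, y) :: t)) y h := rfl

lemma sum_pmf {B : Type} [Fintype B] (ν : PMF B) : ∑ b : B, ν b = 1 := by
  rw [← tsum_fintype (L := .unconditional _)]; exact ν.tsum_coe

lemma pmf_le_one {B : Type} [Fintype B] (ν : PMF B) (b : B) : ν b ≤ 1 :=
  ν.coe_le_one b

lemma oneStep (M : POMDP L A O) (ν : PMF A) (x : L) :
    ∑ a : A, ∑ y : L, ν a * M.δ x a y = 1 := by
  have : ∀ a : A, ∑ y : L, ν a * M.δ x a y = ν a := by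
    intro a
    rw [← Finset.mul_sum, sum_pmf (M.δ x a), mul_one]
  simp only [this, sum_pmf ν]

lemma mass (M : POMDP L A O) : ∀ (n : ℕ) (π) (x : L),
    ∑ f : Fin n → A × L, M.prefProbAux π x (List.ofFn f) = 1
  | 0, π, x => by simp
  | n + 1, π, x => by
    rw [← Equiv.sum_comp (Fin.consEquiv fun _ : Fin (n + 1) => A × L)
        (fun f => M.prefProbAux π x (List.ofFn f))]
    have : ∀ (p : A × L) (g : Fin n → A × L),
        M.prefProbAux π x (List.ofFn (Fin.consEquiv (fun _ => A × L) (p, g))) =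
          π [] p.1 * M.δ x p.1 p.2 *
            M.prefProbAux (fun t => π ((p.1, p.2) :: t)) p.2 (List.ofFn g) := by
      intro p g
      rw [show ((Fin.consEquiv fun _ : Fin (n + 1) => A × L) (p, g)) = Fin.cons p g from rfl,
        List.ofFn_cons]
      exact prefProbAux_cons M π x p.1 p.2 _
    simp only [this]
    have : ∀ p : A × L,
        ∑ g : Fin n → A × L, π [] p.1 * M.δ x p.1 p.2 *
            M.prefProbAux (fun t => π ((p.1, p.2) :: t)) p.2 (List.ofFn g) =
          π [] p.1 * M.δ x p.1 p.2 := by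
      intro p
      rw [← Finset.mul_sum, mass M n _ p.2, mul_one]
    rw [Fintype.sum_prod_type]
    simp only [this]
    rw [Fintype.sum_prod_type]
    exact oneStep M (π []) x


open Classical in
/-- finite-horizon probability of a predicate on prefixes, continuation form. -/
noncomputable def hp (M : POMDP L A O) (π : List (A × L) → PMF A) (x : L) (n : ℕ)
    (P : List (A × L) → Prop) : ℝ≥0∞ :=
  ∑ f : Fin n → A × L, if P (List.ofFn f) then M.prefProbAux π x (List.ofFn f) else 0

lemma hp_congr {M : POMDP L A O} {π x n} {P Q : List (A × L) → Prop}
    (h : ∀ t : List (A × L), t.length = n → (P t ↔ Q t)) :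
    hp M π x n P = hp M π x n Q := by
  unfold hp
  exact Finset.sum_congr rfl fun f _ => by
    by_cases hP : P (List.ofFn f)
    · rw [if_pos hP, if_pos (((h _ (by simp)).mp hP))]
    · rw [if_neg hP, if_neg (fun hQ => hP ((h _ (by simp)).mpr hQ))]

lemma hp_mono {M : POMDP L A O} {π x n} {P Q : List (A × L) → Prop}
    (h : ∀ t : List (A × L), P t → Q t) : hp M π x n P ≤ hp M π x n Q := by
  unfold hp
  refine Finset.sum_le_sum fun f _ => ?_
  by_cases hP : P (List.ofFn f)
  · rw [if_pos hP, if_pos (h _ hP)]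
  · rw [if_neg hP]; exact zero_le

lemma hp_le_one {M : POMDP L A O} {π x n} {P : List (A × L) → Prop} :
    hp M π x n P ≤ 1 := by
  rw [← mass M n π x]
  unfold hp
  refine Finset.sum_le_sum fun f _ => ?_
  by_cases hP : P (List.ofFn f)
  · rw [if_pos hP]
  · rw [if_neg hP]; exact zero_le

lemma hp_add_compl {M : POMDP L A O} {π x n} (P : List (A × L) → Prop) :
    hp M π x n P + hp M π x n (fun t => ¬ P t) = 1 := by
  unfold hp
  rw [← Finset.sum_add_distrib, ← mass M n π x]
  refine Finset.sum_congr rfl fun f _ => ?_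
  by_cases hP : P (List.ofFn f)
  · rw [if_pos hP, if_neg (by simpa using hP), add_zero]
  · rw [if_neg hP, if_pos hP, zero_add]

lemma horizonProb_eq_hp (M : POMDP L A O) (α : Strategy L A) (l : L) (n : ℕ)
    (P : List (A × L) → Prop) : M.horizonProb α l n P = hp M (α l) l n P := by
  unfold horizonProb hp
  refine Finset.sum_congr rfl fun f _ => ?_
  by_cases hP : P (List.ofFn f)
  · rw [Set.indicator_of_mem (by exact hP), if_pos hP]; rfl
  · rw [Set.indicator_of_notMem (by exact hP), if_neg hP]

@[simp] lemma statesOf_nil (x : L) : statesOf x ([] : List (A × L)) = [x] := rfl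

lemma statesOf_cons (x : L) (a : A) (y : L) (h : List (A × L)) :
    statesOf x ((a, y) :: h) = x :: statesOf y h := rfl

open Classical in
noncomputable def safeN (M : POMDP L A O) (T : Set L) :
    (List (A × L) → PMF A) → L → ℕ → ℝ≥0∞
  | _, x, 0 => if x ∈ T then 1 else 0
  | π, x, n + 1 => if x ∈ T then
      ∑ a : A, ∑ y : L, π [] a * M.δ x a y * safeN M T (fun t => π ((a, y) :: t)) y n
    else 0

open Classical in
noncomputable def unsafeN (M : POMDP L A O) (T : Set L) :
    (List (A × L) → PMF A) → L → ℕ → ℝ≥0∞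
  | _, x, 0 => if x ∈ T then 0 else 1
  | π, x, n + 1 => if x ∈ T then
      ∑ a : A, ∑ y : L, π [] a * M.δ x a y * unsafeN M T (fun t => π ((a, y) :: t)) y n
    else 1

lemma safeN_of_not_mem {M : POMDP L A O} {T : Set L} {π x} (h : x ∉ T) (n : ℕ) :
    safeN M T π x n = 0 := by cases n <;> simp [safeN, h]

lemma safeN_add_unsafeN (M : POMDP L A O) (T : Set L) :
    ∀ (n : ℕ) (π) (x : L), safeN M T π x n + unsafeN M T π x n = 1
  | 0, π, x => by by_cases h : x ∈ T <;> simp [safeN, unsafeN, h]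
  | n + 1, π, x => by
    by_cases h : x ∈ T
    · simp only [safeN, unsafeN, if_pos h]
      have : (∑ a : A, ∑ y : L, π [] a * M.δ x a y *
            safeN M T (fun t => π ((a, y) :: t)) y n) +
          (∑ a : A, ∑ y : L, π [] a * M.δ x a y *
            unsafeN M T (fun t => π ((a, y) :: t)) y n) =
          ∑ a : A, ∑ y : L, π [] a * M.δ x a y := by
        rw [← Finset.sum_add_distrib]
        refine Finset.sum_congr rfl fun a _ => ?_
        rw [← Finset.sum_add_distrib]
        refine Finset.sum_congr rfl fun y _ => ?_
        rw [← mul_add, safeN_add_unsafeN M T n _ y, mul_one]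
      rw [this, oneStep]
    · simp [safeN, unsafeN, if_neg h]

lemma safeN_le_one {M : POMDP L A O} {T : Set L} {π} {x : L} {n : ℕ} :
    safeN M T π x n ≤ 1 := by
  conv_rhs => rw [← safeN_add_unsafeN M T n π x]
  exact le_add_right le_rfl

open Classical in
lemma hp_zero {M : POMDP L A O} {π x} {P : List (A × L) → Prop} :
    hp M π x 0 P = if P [] then 1 else 0 := by
  have h0 : ∀ f : Fin 0 → A × L, List.ofFn f = [] := fun f => List.ofFn_zero
  simp [hp, h0]

open Classical in
lemma hp_succ {M : POMDP L A O} {π} {x : L} {n : ℕ} {P : List (A × L) → Prop} :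
    hp M π x (n + 1) P = ∑ a : A, ∑ y : L, π [] a * M.δ x a y *
      hp M (fun t => π ((a, y) :: t)) y n (fun t => P ((a, y) :: t)) := by
  unfold hp
  rw [← Equiv.sum_comp (Fin.consEquiv fun _ : Fin (n + 1) => A × L)
      (fun f => if P (List.ofFn f) then M.prefProbAux π x (List.ofFn f) else 0),
    Fintype.sum_prod_type, Fintype.sum_prod_type]
  refine Finset.sum_congr rfl fun a _ => Finset.sum_congr rfl fun y _ => ?_
  rw [Finset.mul_sum]
  refine Finset.sum_congr rfl fun g _ => ?_
  rw [show ((Fin.consEquiv fun _ : Fin (n + 1) => A × L) ((a, y), g)) = Fin.cons (a, y) g from rfl,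
    List.ofFn_cons, prefProbAux_cons, mul_ite, mul_zero]

lemma hp_false {M : POMDP L A O} {π x n} : hp M π x n (fun _ => False) = 0 := by
  unfold hp; simp

lemma bridge (M : POMDP L A O) (T : Set L) :
    ∀ (n : ℕ) (π) (x : L),
      safeN M T π x n = hp M π x n (fun h => ∀ s ∈ statesOf x h, s ∈ T)
  | 0, π, x => by
    rw [hp_zero]
    by_cases h : x ∈ T <;> simp [safeN, h]
  | n + 1, π, x => by
    rw [hp_succ]
    by_cases h : x ∈ T
    · simp only [safeN, if_pos h]
      refine Finset.sum_congr rfl fun a _ => Finset.sum_congr rfl fun y _ => ?_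
      rw [bridge M T n _ y]
      congr 1
      refine hp_congr fun t _ => ?_
      rw [statesOf_cons]
      simp [h]
    · rw [safeN_of_not_mem h]
      have h0 : ∀ (a : A) (y : L), hp M (fun t => π ((a, y) :: t)) y n
          (fun t => ∀ s ∈ statesOf x ((a, y) :: t), s ∈ T) = 0 := by
        intro a y
        rw [hp_congr (Q := fun _ => False) fun t _ => ?_, hp_false]
        constructor
        · intro hP
          exact h (hP x (by rw [statesOf_cons]; exact List.mem_cons_self))
        · exact fun hF => hF.elim
      simp only [h0, mul_zero, Finset.sum_const_zero]

lemma safeN_split (M : POMDP L A O) (T : Set L) (r : ℕ) (B : ℝ≥0∞) (R : L → Prop)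
    (hR : ∀ x a y, R x → M.δ x a y ≠ 0 → R y)
    (H : ∀ π (y : L), M.ObsCons π → R y → safeN M T π y r ≤ B) :
    ∀ (c : ℕ) (π) (x : L), M.ObsCons π → R x →
      safeN M T π x (c + r) ≤ safeN M T π x c * B
  | 0, π, x, hπ, hx => by
    rw [Nat.zero_add]
    by_cases h : x ∈ T
    · simpa [safeN, h] using H π x hπ hx
    · rw [safeN_of_not_mem h, safeN_of_not_mem h, zero_mul]
  | c + 1, π, x, hπ, hx => by
    rw [show c + 1 + r = (c + r) + 1 from by omega]
    by_cases h : x ∈ T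
    · simp only [safeN, if_pos h]
      rw [Finset.sum_mul]
      refine Finset.sum_le_sum fun a _ => ?_
      rw [Finset.sum_mul]
      refine Finset.sum_le_sum fun y _ => ?_
      by_cases hz : M.δ x a y = 0
      · simp [hz]
      · refine le_trans (mul_le_mul_right
          (safeN_split M T r B R hR H c _ y (hπ.cons _) (hR x a y hx hz))
          (π [] a * M.δ x a y)) ?_
        exact (mul_assoc _ _ _).ge
    · rw [safeN_of_not_mem h, safeN_of_not_mem h, zero_mul]

open Classical in
noncomputable def pmin (M : POMDP L A O) : ℝ≥0∞ :=
  (Finset.univ.filter fun t : L × A × L => M.δ t.1 t.2.1 t.2.2 ≠ 0).inf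
    fun t => M.δ t.1 t.2.1 t.2.2

lemma pmin_pos (M : POMDP L A O) : 0 < pmin M := by
  rw [pmin, Finset.lt_inf_iff (by simp : (0 : ℝ≥0∞) < ⊤)]
  intro t ht
  rw [Finset.mem_filter] at ht
  exact pos_iff_ne_zero.mpr ht.2

open Classical in
lemma pmin_le (M : POMDP L A O) {x : L} {a : A} {y : L} (h : M.δ x a y ≠ 0) :
    pmin M ≤ M.δ x a y :=
  Finset.inf_le (by simp [Finset.mem_filter, h] : ((x, (a, y)) : L × A × L) ∈ _)

lemma pmin_le_one (M : POMDP L A O) (x : L) (a : A) : pmin M ≤ 1 := by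
  obtain ⟨y, hy⟩ := (M.δ x a).support_nonempty
  rw [PMF.mem_support_iff] at hy
  exact (pmin_le M hy).trans ((M.δ x a).coe_le_one y)

open Classical in
noncomputable def postC (M : POMDP L A O) (S : Finset L) (a : A) (o : O) : Finset L :=
  Finset.univ.filter fun y => (∃ x ∈ S, M.δ x a y ≠ 0) ∧ M.obs y = o

def SafeC (M : POMDP L A O) (T : Set L) : ℕ → Finset L → Prop
  | 0, S => ∀ x ∈ S, x ∈ T
  | n + 1, S => (∀ x ∈ S, x ∈ T) ∧ ∃ a : A, ∀ o : O, SafeC M T n (M.postC S a o)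

lemma postC_empty (M : POMDP L A O) (a : A) (o : O) : M.postC ∅ a o = ∅ := by
  ext y; simp [postC]

lemma SafeC_empty (M : POMDP L A O) (T : Set L) (a0 : A) :
    ∀ n, SafeC M T n (∅ : Finset L)
  | 0 => fun x hx => by simp at hx
  | n + 1 => ⟨fun x hx => by simp at hx, a0, fun o => by
      rw [postC_empty]; exact SafeC_empty M T a0 n⟩

lemma SafeC_antitone (M : POMDP L A O) (T : Set L) :
    ∀ (n : ℕ) (S : Finset L), SafeC M T (n + 1) S → SafeC M T n S
  | 0, S, h => h.1
  | n + 1, S, h => ⟨h.1, h.2.choose, fun o => SafeC_antitone M T n _ (h.2.choose_spec o)⟩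

lemma SafeC_mono (M : POMDP L A O) (T : Set L) {m n : ℕ} (h : m ≤ n) (S : Finset L)
    (hS : SafeC M T n S) : SafeC M T m S := by
  induction n with
  | zero => rwa [Nat.le_zero.mp h]
  | succ n ih =>
    rcases Nat.eq_or_lt_of_le h with he | hl
    · rwa [he]
    · exact ih (Nat.lt_succ_iff.mp hl) (SafeC_antitone M T n S hS)

open Classical in
lemma key (M : POMDP L A O) (T : Set L) (a0 : A) :
    ∀ (n : ℕ) (S : Finset L) (π), M.ObsCons π → ¬ SafeC M T n S →
      pmin M ^ n ≤ ∑ x ∈ S, unsafeN M T π x n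
  | 0, S, π, hπ, hS => by
    simp only [SafeC, not_forall] at hS
    obtain ⟨x, hxS, hxT⟩ := hS
    calc pmin M ^ 0 = 1 := pow_zero _
    _ = unsafeN M T π x 0 := by simp [unsafeN, hxT]
    _ ≤ ∑ x ∈ S, unsafeN M T π x 0 :=
        Finset.single_le_sum (f := fun x => unsafeN M T π x 0) (fun _ _ => zero_le) hxS
  | n + 1, S, π, hπ, hS => by
    by_cases hT : ∀ x ∈ S, (x : L) ∈ T
    · have hA : ∀ a : A, ∃ o : O, ¬ SafeC M T n (M.postC S a o) := by
        by_contra hc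
        push_neg at hc
        obtain ⟨a, ha⟩ := hc
        exact hS ⟨hT, a, ha⟩
      set S' : A → Finset L := fun a => M.postC S a (hA a).choose with hS'
      have hNS' : ∀ a, ¬ SafeC M T n (S' a) := fun a => (hA a).choose_spec
      have hne : ∀ a, (S' a).Nonempty := by
        intro a
        rcases Finset.eq_empty_or_nonempty (S' a) with he | hn
        · exact absurd (he ▸ SafeC_empty M T a0 n) (hNS' a)
        · exact hn
      set y0 : A → L := fun a => (hne a).choose with hy0
      have hy0m : ∀ a, y0 a ∈ S' a := fun a => (hne a).choose_spec
      set π'' : A → List (A × L) → PMF A := fun a => fun t => π ((a, y0 a) :: t) with hπ''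
      have hobs : ∀ a, ∀ y ∈ S' a, M.obs y = M.obs (y0 a) := by
        intro a y hy
        have h1 := (Finset.mem_filter.mp hy).2.2
        have h2 := (Finset.mem_filter.mp (hy0m a)).2.2
        rw [h1, h2]
      have hcongr : ∀ a, ∀ y ∈ S' a,
          (fun t => π ((a, y) :: t)) = π'' a := by
        intro a y hy
        exact hπ.congr_cons (hobs a y hy)
      have hdel : ∀ a, ∀ y ∈ S' a, pmin M ≤ ∑ x ∈ S, M.δ x a y := by
        intro a y hy
        obtain ⟨x, hxS, hx⟩ := (Finset.mem_filter.mp hy).2.1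
        exact (pmin_le M hx).trans
          (Finset.single_le_sum (f := fun x => M.δ x a y) (fun _ _ => zero_le) hxS)
      have e1 : ∑ x ∈ S, unsafeN M T π x (n + 1) =
          ∑ a : A, ∑ y : L, (π [] a * ∑ x ∈ S, M.δ x a y) *
            unsafeN M T (fun t => π ((a, y) :: t)) y n := by
        have e0 : ∀ x ∈ S, unsafeN M T π x (n + 1) =
            ∑ a : A, ∑ y : L, π [] a * M.δ x a y *
              unsafeN M T (fun t => π ((a, y) :: t)) y n := fun x hx => by
          simp only [unsafeN, if_pos (hT x hx)]
        rw [Finset.sum_congr rfl e0, Finset.sum_comm]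
        refine Finset.sum_congr rfl fun a _ => ?_
        rw [Finset.sum_comm]
        refine Finset.sum_congr rfl fun y _ => ?_
        rw [← Finset.sum_mul, ← Finset.mul_sum]
      rw [e1]
      calc pmin M ^ (n + 1)
          = ∑ a : A, π [] a * (pmin M * pmin M ^ n) := by
            rw [← Finset.sum_mul, sum_pmf, one_mul, pow_succ']
        _ ≤ ∑ a : A, π [] a *
              (pmin M * ∑ y ∈ S' a, unsafeN M T (π'' a) y n) := by
            refine Finset.sum_le_sum fun a _ => ?_
            exact mul_le_mul_right (mul_le_mul_right
              (key M T a0 n (S' a) (π'' a) (hπ.cons _) (hNS' a)) _) _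
        _ ≤ ∑ a : A, ∑ y ∈ S' a, (π [] a * ∑ x ∈ S, M.δ x a y) *
              unsafeN M T (fun t => π ((a, y) :: t)) y n := by
            refine Finset.sum_le_sum fun a _ => ?_
            rw [Finset.mul_sum, Finset.mul_sum]
            refine Finset.sum_le_sum fun y hy => ?_
            rw [hcongr a y hy]
            calc π [] a * (pmin M * unsafeN M T (π'' a) y n)
                = (π [] a * pmin M) * unsafeN M T (π'' a) y n := by
                  rw [mul_assoc]
              _ ≤ (π [] a * ∑ x ∈ S, M.δ x a y) * unsafeN M T (π'' a) y n :=
                  mul_le_mul_left (mul_le_mul_right (hdel a y hy) _) _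
        _ ≤ ∑ a : A, ∑ y : L, (π [] a * ∑ x ∈ S, M.δ x a y) *
              unsafeN M T (fun t => π ((a, y) :: t)) y n := by
            refine Finset.sum_le_sum fun a _ => ?_
            exact Finset.sum_le_sum_of_subset (Finset.subset_univ _)
    · push_neg at hT
      obtain ⟨x, hxS, hxT⟩ := hT
      calc pmin M ^ (n + 1) ≤ 1 := pow_le_one' (pmin_le_one M x a0) _
        _ = unsafeN M T π x (n + 1) := by simp [unsafeN, hxT]
        _ ≤ ∑ x ∈ S, unsafeN M T π x (n + 1) :=
            Finset.single_le_sum (f := fun x => unsafeN M T π x (n + 1))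
              (fun _ _ => zero_le) hxS

def WinC (M : POMDP L A O) (T : Set L) (S : Finset L) : Prop := ∀ n, SafeC M T n S

lemma WinC_step (M : POMDP L A O) (T : Set L) (S : Finset L) (hW : WinC M T S) :
    (∀ x ∈ S, x ∈ T) ∧ ∃ a : A, ∀ o : O, WinC M T (M.postC S a o) := by
  refine ⟨(hW 0), ?_⟩
  by_contra hc
  push_neg at hc
  have hc' : ∀ a : A, ∃ p : O × ℕ, ¬ SafeC M T p.2 (M.postC S a p.1) := by
    intro a
    obtain ⟨o, ho⟩ := hc a
    simp only [WinC, not_forall] at ho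
    obtain ⟨n, hn⟩ := ho
    exact ⟨(o, n), hn⟩
  set N : ℕ := Finset.univ.sup fun a : A => (hc' a).choose.2 with hN
  obtain ⟨-, a, ha⟩ := hW (N + 1)
  refine (hc' a).choose_spec ?_
  exact SafeC_mono M T (Finset.le_sup (Finset.mem_univ a)) _ (ha (hc' a).choose.1)

open Classical in
noncomputable def uF (M : POMDP L A O) : Finset L → O → A → Finset L := fun S o a =>
  Finset.univ.filter fun y => ∃ x ∈ S.filter (fun z => M.obs z = o), M.δ x a y ≠ 0

open Classical in
noncomputable def act (M : POMDP L A O) (T : Set L) [Nonempty A] (S : Finset L) : A :=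
  if h : ∃ a : A, ∀ o : O, WinC M T (M.postC S a o) then h.choose else Classical.arbitrary A

lemma act_spec (M : POMDP L A O) (T : Set L) [Nonempty A] {S : Finset L}
    (hW : WinC M T S) : ∀ o : O, WinC M T (M.postC S (act M T S) o) := by
  have h := (WinC_step M T S hW).2
  rw [act, dif_pos h]
  exact h.choose_spec

open Classical in
noncomputable def nextF (M : POMDP L A O) (T : Set L) [Nonempty A] :
    Finset L → O → PMF A := fun S o =>
  PMF.pure (act M T (S.filter fun z => M.obs z = o))

open Classical in
lemma uF_filter (M : POMDP L A O) (S : Finset L) (o : O) (a : A) (o' : O) :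
    (uF M S o a).filter (fun z => M.obs z = o') =
      M.postC (S.filter fun z => M.obs z = o) a o' := by
  ext y
  simp only [uF, postC, Finset.mem_filter, Finset.mem_univ, true_and]

lemma memRun_congr (M : POMDP L A O) {Mem : Type} (u : Mem → O → A → Mem) :
    ∀ (h h' : List (A × L)) (m0 : Mem) (x x' : L), M.obs x = M.obs x' →
      h.map Prod.fst = h'.map Prod.fst →
      h.map (fun p => M.obs p.2) = h'.map (fun p => M.obs p.2) →
      (M.memRun u m0 x h).1 = (M.memRun u m0 x' h').1 ∧
        M.obs (M.memRun u m0 x h).2 = M.obs (M.memRun u m0 x' h').2 := by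
  intro h
  induction h with
  | nil =>
    intro h' m0 x x' hobs h1 h2
    cases h' with
    | nil => exact ⟨rfl, hobs⟩
    | cons p t => simp at h1
  | cons p t ih =>
    intro h' m0 x x' hobs h1 h2
    cases h' with
    | nil => simp at h1
    | cons p' t' =>
      obtain ⟨pa, py⟩ := p
      obtain ⟨pa', py'⟩ := p'
      simp only [List.map_cons, List.cons.injEq] at h1 h2
      obtain ⟨ha, h1⟩ := h1
      obtain ⟨ho, h2⟩ := h2
      subst ha
      have e : u m0 (M.obs x) pa = u m0 (M.obs x') pa := by rw [hobs]
      show (M.memRun u (u m0 (M.obs x) pa) py t).1 =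
          (M.memRun u (u m0 (M.obs x') pa) py' t').1 ∧
        M.obs (M.memRun u (u m0 (M.obs x) pa) py t).2 =
          M.obs (M.memRun u (u m0 (M.obs x') pa) py' t').2
      rw [e]
      exact ih t' _ py py' ho h1 h2

lemma fmStrategy_obsBased (M : POMDP L A O) {Mem : Type} (u : Mem → O → A → Mem)
    (next : Mem → O → PMF A) (m0 : Mem) :
    M.ObservationBased (M.fmStrategy u next m0) := by
  intro x x' h h' hobs h1 h2
  obtain ⟨e1, e2⟩ := memRun_congr M u h h' m0 x x' hobs h1 h2
  show next _ (M.obs _) = next _ (M.obs _)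
  rw [e1, e2]

open Classical in
lemma invariant (M : POMDP L A O) (T : Set L) [Nonempty A] :
    ∀ (h : List (A × L)) (S : Finset L) (y : L), y ∈ S →
      WinC M T (S.filter fun z => M.obs z = M.obs y) →
      M.prefProbAux (M.fmStrategy (uF M) (nextF M T) S y) y h ≠ 0 →
      ∀ s ∈ statesOf y h, s ∈ T
  | [], S, y, hyS, hW, hne => by
    intro s hs
    rw [statesOf_nil, List.mem_singleton] at hs
    subst hs
    exact (hW 0) s (Finset.mem_filter.mpr ⟨hyS, rfl⟩)
  | (a, y') :: t, S, y, hyS, hW, hne => by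
    set S₁ : Finset L := S.filter fun z => M.obs z = M.obs y with hS₁
    have hπ0 : M.fmStrategy (uF M) (nextF M T) S y [] = PMF.pure (act M T S₁) := rfl
    rw [prefProbAux_cons, mul_ne_zero_iff, mul_ne_zero_iff] at hne
    obtain ⟨⟨hν, hδ⟩, hrest⟩ := hne
    rw [hπ0] at hν
    have ha : a = act M T S₁ := by
      by_contra hc
      rw [PMF.pure_apply, if_neg hc] at hν
      exact hν rfl
    subst ha
    have hy' : y' ∈ uF M S (M.obs y) (act M T S₁) := by
      rw [uF]
      refine Finset.mem_filter.mpr ⟨Finset.mem_univ _, y, Finset.mem_filter.mpr ⟨hyS, rfl⟩, hδ⟩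
    have hW' : WinC M T ((uF M S (M.obs y) (act M T S₁)).filter
        fun z => M.obs z = M.obs y') := by
      rw [uF_filter]
      exact act_spec M T hW (M.obs y')
    intro s hs
    rw [statesOf_cons, List.mem_cons] at hs
    rcases hs with rfl | hs
    · exact (hW 0) s (Finset.mem_filter.mpr ⟨hyS, rfl⟩)
    · exact invariant M T t (uF M S (M.obs y) (act M T S₁)) y' hy' hW' hrest s hs

open Classical in
lemma safeProb_exists (M : POMDP L A O) (T : Set L) [Nonempty A] (x : L)
    (hW : WinC M T {x}) :
    ∃ β : Strategy L A, M.ObservationBased β ∧ M.safeProb β x T = 1 := by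
  refine ⟨M.fmStrategy (uF M) (nextF M T) {x}, fmStrategy_obsBased M _ _ _, ?_⟩
  have hfilter : ({x} : Finset L).filter (fun z => M.obs z = M.obs x) = {x} := by
    ext z
    simp only [Finset.mem_filter, Finset.mem_singleton, and_iff_left_iff_imp]
    rintro rfl
    rfl
  have h1 : ∀ n, M.horizonProb (M.fmStrategy (uF M) (nextF M T) {x}) x n
      (fun h => ∀ s ∈ statesOf x h, s ∈ T) = 1 := by
    intro n
    rw [horizonProb_eq_hp]
    unfold hp
    rw [← mass M n (M.fmStrategy (uF M) (nextF M T) {x} x) x]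
    refine Finset.sum_congr rfl fun f _ => ?_
    by_cases hz :
        M.prefProbAux (M.fmStrategy (uF M) (nextF M T) {x} x) x (List.ofFn f) = 0
    · rw [hz]; simp
    · exact if_pos (invariant M T (List.ofFn f) {x} x (Finset.mem_singleton_self x)
        (by rw [hfilter]; exact hW) hz)
  unfold safeProb
  simp only [h1, iInf_const]

lemma suff (M : POMDP L A O) (T : Set L) (R : L → Prop)
    (hR : ∀ (x : L) (a : A) (y : L), R x → M.δ x a y ≠ 0 → R y) (r : ℕ) (B : ℝ≥0∞)
    (H : ∀ π (y : L), M.ObsCons π → R y → safeN M T π y r ≤ B) :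
    ∀ (k : ℕ) (π) (x : L), M.ObsCons π → R x →
      hp M π x (k + r) (fun h => ∀ s ∈ (statesOf x h).drop k, s ∈ T) ≤ B
  | 0, π, x, hπ, hx => by
    rw [Nat.zero_add]
    calc hp M π x r (fun h => ∀ s ∈ (statesOf x h).drop 0, s ∈ T)
        = safeN M T π x r := by
          rw [bridge]
          exact (hp_congr fun t _ => by rw [List.drop_zero]).symm
      _ ≤ B := H π x hπ hx
  | k + 1, π, x, hπ, hx => by
    rw [show k + 1 + r = (k + r) + 1 from by omega, hp_succ]
    calc (∑ a : A, ∑ y : L, π [] a * M.δ x a y *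
          hp M (fun t => π ((a, y) :: t)) y (k + r)
            (fun t => ∀ s ∈ (statesOf x ((a, y) :: t)).drop (k + 1), s ∈ T))
        ≤ ∑ a : A, ∑ y : L, π [] a * M.δ x a y * B := by
          refine Finset.sum_le_sum fun a _ => Finset.sum_le_sum fun y _ => ?_
          by_cases hz : M.δ x a y = 0
          · simp [hz]
          · refine mul_le_mul_right ?_ _
            have he : (fun t : List (A × L) =>
                ∀ s ∈ (statesOf x ((a, y) :: t)).drop (k + 1), s ∈ T) =
                fun t => ∀ s ∈ (statesOf y t).drop k, s ∈ T := by
              funext t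
              rw [statesOf_cons, List.drop_succ_cons]
            rw [he]
            exact suff M T R hR r B H k _ y (hπ.cons _) (hR x a y hx hz)
      _ = B := by
          have e : ∀ a : A, ∑ y : L, π [] a * M.δ x a y * B =
              (∑ y : L, π [] a * M.δ x a y) * B := fun a => (Finset.sum_mul _ _ _).symm
          rw [Finset.sum_congr rfl fun a _ => e a, ← Finset.sum_mul, oneStep, one_mul]

end Aux

end POMDP


/-- If no state `l'` reachable from `l` in the underlying graph
admits an observation-based strategy that is almost-sure winning for `Safe(T)`
from `l'`, then for every observation-based strategy `α`,
`Pr_l^α(Büchi(L ∖ T)) = 1`: with probability 1 the play visits states outside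
`T` infinitely often. -/
theorem buchi_complement_almost_sure_of_no_almost_safe {L A O : Type}
    [Fintype L] [Fintype A] (M : POMDP L A O) (T : Set L) (l : L)
    (hno : ∀ l' : L, M.ReachableFrom l l' →
      ¬ ∃ α : POMDP.Strategy L A, M.ObservationBased α ∧ M.safeProb α l' T = 1) :
    ∀ α : POMDP.Strategy L A, M.ObservationBased α → M.buchiProb α l Tᶜ = 1 := by
  classical
  intro α hα
  obtain ⟨a0, -⟩ := (α l []).support_nonempty
  haveI : Nonempty A := ⟨a0⟩
  have hbad : ∀ x : L, M.ReachableFrom l x → ∃ n, ¬ POMDP.SafeC M T n {x} := by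
    intro x hx
    by_contra hc
    push_neg at hc
    exact hno x hx (POMDP.safeProb_exists M T x hc)
  set nfun : L → ℕ := fun x =>
    if h : ∃ n, ¬ POMDP.SafeC M T n {x} then h.choose else 0 with hnfun
  set N : ℕ := Finset.univ.sup nfun with hNdef
  have hNbad : ∀ x : L, M.ReachableFrom l x → ¬ POMDP.SafeC M T N {x} := by
    intro x hx hS
    have h := hbad x hx
    have h2 : ¬ POMDP.SafeC M T (nfun x) {x} := by
      simp only [hnfun, dif_pos h]
      exact h.choose_spec
    exact h2 (POMDP.SafeC_mono M T (Finset.le_sup (Finset.mem_univ x)) _ hS)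
  have hpow_ne_top : POMDP.pmin M ^ N ≠ ⊤ :=
    ne_top_of_le_ne_top ENNReal.one_ne_top (pow_le_one' (POMDP.pmin_le_one M l a0) N)
  have hpow_ne_zero : POMDP.pmin M ^ N ≠ 0 :=
    pow_ne_zero N (POMDP.pmin_pos M).ne'
  set ε : ℝ≥0∞ := 1 - POMDP.pmin M ^ N with hε
  have hεlt : ε < 1 := ENNReal.sub_lt_self ENNReal.one_ne_top one_ne_zero hpow_ne_zero
  have hbound : ∀ (π) (x : L), M.ObsCons π → M.ReachableFrom l x →
      POMDP.safeN M T π x N ≤ ε := by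
    intro π x hπ hx
    have hk := POMDP.key M T a0 N {x} π hπ (hNbad x hx)
    rw [Finset.sum_singleton] at hk
    refine ENNReal.le_sub_of_add_le_right hpow_ne_top ?_
    calc POMDP.safeN M T π x N + POMDP.pmin M ^ N
        ≤ POMDP.safeN M T π x N + POMDP.unsafeN M T π x N := add_le_add_right hk _
      _ = 1 := POMDP.safeN_add_unsafeN M T N π x
  have hR : ∀ (x : L) (a : A) (y : L), M.ReachableFrom l x → M.δ x a y ≠ 0 →
      M.ReachableFrom l y := fun x a y hx hz =>
    Relation.ReflTransGen.tail hx ⟨a, pos_iff_ne_zero.mpr hz⟩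
  have hiter : ∀ (m : ℕ) (π) (x : L), M.ObsCons π → M.ReachableFrom l x →
      POMDP.safeN M T π x (m * N) ≤ ε ^ m := by
    intro m
    induction m with
    | zero =>
      intro π x _ _
      rw [Nat.zero_mul, pow_zero]
      exact POMDP.safeN_le_one
    | succ m ih =>
      intro π x hπ hx
      rw [show (m + 1) * N = N + m * N from by ring]
      calc POMDP.safeN M T π x (N + m * N)
          ≤ POMDP.safeN M T π x N * ε ^ m :=
            POMDP.safeN_split M T (m * N) (ε ^ m) (M.ReachableFrom l) hR ih N π x hπ hx
        _ ≤ ε * ε ^ m := mul_le_mul_left (hbound π x hπ hx) _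
        _ = ε ^ (m + 1) := (pow_succ' ε m).symm
  have hαo : M.ObsCons (α l) := fun h h' h1 h2 => hα l l h h' rfl h1 h2
  have hsuffb : ∀ k m : ℕ,
      POMDP.hp M (α l) l (k + m * N)
        (fun h => ∀ s ∈ (POMDP.statesOf l h).drop k, s ∈ T) ≤ ε ^ m := fun k m =>
    POMDP.suff M T (M.ReachableFrom l) hR (m * N) (ε ^ m) (hiter m) k (α l) l hαo
      Relation.ReflTransGen.refl
  have hinf : (⨅ m : ℕ, ε ^ m) = 0 :=
    le_antisymm (ge_of_tendsto' (ENNReal.tendsto_pow_atTop_nhds_zero_of_lt_one hεlt)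
      fun m => iInf_le _ m) (zero_le)
  have hsup : ∀ k : ℕ, (⨆ n, M.horizonProb α l n (fun h =>
      ∃ j, ∃ hj : j < (POMDP.statesOf l h).length, k ≤ j ∧
        (POMDP.statesOf l h).get ⟨j, hj⟩ ∈ Tᶜ)) = 1 := by
    intro k
    refine le_antisymm (iSup_le fun n => ?_) ?_
    · rw [POMDP.horizonProb_eq_hp]
      exact POMDP.hp_le_one
    · have hlow : ∀ m : ℕ, 1 - ε ^ m ≤ M.horizonProb α l (k + m * N) (fun h =>
          ∃ j, ∃ hj : j < (POMDP.statesOf l h).length, k ≤ j ∧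
            (POMDP.statesOf l h).get ⟨j, hj⟩ ∈ Tᶜ) := by
        intro m
        rw [POMDP.horizonProb_eq_hp]
        set P : List (A × L) → Prop := fun h =>
          ∃ j, ∃ hj : j < (POMDP.statesOf l h).length, k ≤ j ∧
            (POMDP.statesOf l h).get ⟨j, hj⟩ ∈ Tᶜ with hP
        have hmono : POMDP.hp M (α l) l (k + m * N) (fun t => ¬ P t) ≤ ε ^ m := by
          refine le_trans (POMDP.hp_mono fun t hnp => ?_) (hsuffb k m)
          intro s hs
          rw [List.mem_iff_get] at hs
          obtain ⟨i, rfl⟩ := hs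
          by_contra hsT
          have hlen : k + i.1 < (POMDP.statesOf l t).length := by
            have hi : (i : ℕ) < (POMDP.statesOf l t).length - k := by
              simpa [List.length_drop] using i.2
            omega
          refine hnp ⟨k + i.1, hlen, Nat.le_add_right _ _, ?_⟩
          have heq : (POMDP.statesOf l t).get ⟨k + i.1, hlen⟩ =
              ((POMDP.statesOf l t).drop k).get i := by
            simp [List.getElem_drop]
          rw [heq]
          exact hsT
        rw [tsub_le_iff_right]
        calc (1 : ℝ≥0∞) = POMDP.hp M (α l) l (k + m * N) P +
              POMDP.hp M (α l) l (k + m * N) (fun t => ¬ P t) :=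
            (POMDP.hp_add_compl P).symm
          _ ≤ POMDP.hp M (α l) l (k + m * N) P + ε ^ m := add_le_add_right hmono _
      calc (1 : ℝ≥0∞) = 1 - ⨅ m : ℕ, ε ^ m := by rw [hinf, tsub_zero]
        _ ≤ _ := by
            rw [ENNReal.sub_iInf]
            exact iSup_le fun m => (hlow m).trans
              (le_iSup (fun n => M.horizonProb α l n fun h =>
                ∃ j, ∃ hj : j < (POMDP.statesOf l h).length, k ≤ j ∧
                  (POMDP.statesOf l h).get ⟨j, hj⟩ ∈ Tᶜ) (k + m * N))
  unfold POMDP.buchiProb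
  simp only [hsup, iInf_const]
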